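/- Let p be a prime, d ∈ ℕ, and β : ℚ_p^d → ℚ_p^d a continuous linear automorphism all of whose eigenvalues (in an algebraic closure of ℚ_p) have absolute value < 1. If β leaves no nontrivial proper ℚ_p-subspace invariant, then (ℚ_p^d, β) is a simple contraction group: the only closed subgroups N of (ℚ_p^d,+) with β(N) = N are 0 and ℚ_p^d. -/
import Mathlib


open Filter Topology

/-- If `β` is a contractive linear automorphism of `ℚ_p^d` (all eigenvalues in
an algebraic closure have absolute value `< 1`, equivalently `βⁿ(v) → 0` for
all `v`) leaving no nontrivial proper subspace invariant, then `(ℚ_p^d, β)` is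
a simple contraction group: the only closed `β`-stable additive subgroups are
`0` and `ℚ_p^d`. -/
theorem stmt10 (p : ℕ) [Fact p.Prime] (d : ℕ) (hd : 0 < d)
    (β : (Fin d → ℚ_[p]) ≃ₗ[ℚ_[p]] (Fin d → ℚ_[p]))
    (hcontr : ∀ v : Fin d → ℚ_[p],
      Tendsto (fun n : ℕ => (β ^ n) v) atTop (𝓝 0))
    (hirr : ∀ W : Submodule ℚ_[p] (Fin d → ℚ_[p]),
      W.map (β : (Fin d → ℚ_[p]) →ₗ[ℚ_[p]] (Fin d → ℚ_[p])) = W → W = ⊥ ∨ W = ⊤) :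
    ∀ N : AddSubgroup (Fin d → ℚ_[p]),
      IsClosed (N : Set (Fin d → ℚ_[p])) →
      ⇑β '' (N : Set (Fin d → ℚ_[p])) = (N : Set (Fin d → ℚ_[p])) →
      N = ⊥ ∨ N = ⊤ := by
  intro N hcl hstab
  have hp1 : (1:ℝ) < p := by exact_mod_cast (Fact.out : p.Prime).one_lt
  have hp0 : (0:ℝ) < p := lt_trans one_pos hp1
  -- `N` is stable under scalar multiplication by elements of norm ≤ 1
  have hZp : ∀ (c : ℚ_[p]), ‖c‖ ≤ 1 → ∀ x ∈ N, c • x ∈ N := by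
    intro c hc x hx
    have hAcl : IsClosed {a : ℚ_[p] | a • x ∈ N} :=
      hcl.preimage (by continuity)
    have hsub : Set.range (fun z : ℤ => (z : ℚ_[p])) ⊆ {a : ℚ_[p] | a • x ∈ N} := by
      rintro _ ⟨z, rfl⟩
      simpa [Int.cast_smul_eq_zsmul] using N.zsmul_mem hx z
    have hζ : c ∈ closure (Set.range (fun z : ℤ => (z : ℚ_[p]))) := by
      have h1 : (⟨c, hc⟩ : ℤ_[p]) ∈ closure (Set.range (Int.cast : ℤ → ℤ_[p])) :=
        PadicInt.denseRange_intCast _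
      have := map_mem_closure (f := ((↑) : ℤ_[p] → ℚ_[p])) continuous_subtype_val h1
        (t := Set.range (fun z : ℤ => (z : ℚ_[p]))) ?_
      · exact this
      · rintro _ ⟨z, rfl⟩; exact ⟨z, by push_cast; rfl⟩
    exact hAcl.closure_subset_iff.2 hsub hζ
  have hstep : ∀ (x : Fin d → ℚ_[p]) (k j : ℕ),
      (p:ℚ_[p])^k • x ∈ N → (p:ℚ_[p])^(k+j) • x ∈ N := by
    intro x k j hkx
    have e : (p:ℚ_[p])^(k+j) • x = (p:ℚ_[p])^j • ((p:ℚ_[p])^k • x) := by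
      rw [← mul_smul, ← pow_add, add_comm]
    rw [e]
    apply hZp _ _ _ hkx
    rw [norm_pow, Padic.norm_p]
    exact pow_le_one₀ (by positivity) (inv_le_one_of_one_le₀ hp1.le)
  set W : Submodule ℚ_[p] (Fin d → ℚ_[p]) := Submodule.span ℚ_[p] (N : Set _) with hW
  have hWstab : W.map (β : (Fin d → ℚ_[p]) →ₗ[ℚ_[p]] (Fin d → ℚ_[p])) = W := by
    rw [hW, Submodule.map_span]
    congr 1
  rcases hirr W hWstab with h | h
  · left
    rw [AddSubgroup.eq_bot_iff_forall]
    intro x hx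
    have : x ∈ W := Submodule.subset_span hx
    rw [h, Submodule.mem_bot] at this
    exact this
  · right
    have hpk0 : ∀ k : ℕ, ((p:ℚ_[p])^k) ≠ 0 := by
      intro k
      apply pow_ne_zero
      exact_mod_cast (Fact.out : p.Prime).ne_zero
    -- N is absorbing
    have habs : ∀ v : Fin d → ℚ_[p], ∃ k : ℕ, (p:ℚ_[p])^k • v ∈ N := by
      intro v
      have hv : v ∈ W := h ▸ Submodule.mem_top
      refine Submodule.span_induction ?_ ?_ ?_ ?_ hv
      · intro x hx; exact ⟨0, by simpa using hx⟩
      · exact ⟨0, by simpa using N.zero_mem⟩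
      · rintro x y - - ⟨k1, h1⟩ ⟨k2, h2⟩
        refine ⟨max k1 k2, ?_⟩
        have e1 := hstep x k1 (max k1 k2 - k1) h1
        rw [Nat.add_sub_cancel' (le_max_left k1 k2)] at e1
        have e2 := hstep y k2 (max k1 k2 - k2) h2
        rw [Nat.add_sub_cancel' (le_max_right k1 k2)] at e2
        rw [smul_add]
        exact N.add_mem e1 e2
      · rintro c x - ⟨k, hk⟩
        obtain ⟨m, hm⟩ := pow_unbounded_of_one_lt ‖c‖ hp1
        refine ⟨k + m, ?_⟩
        have e : (p:ℚ_[p])^(k+m) • (c • x) = ((p:ℚ_[p])^m * c) • ((p:ℚ_[p])^k • x) := by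
          rw [smul_smul, smul_smul, pow_add]; ring_nf
        rw [e]
        apply hZp _ _ _ hk
        rw [norm_mul, norm_pow, Padic.norm_p]
        have h1 : ((p:ℝ)⁻¹)^m * ‖c‖ ≤ ((p:ℝ)⁻¹)^m * (p:ℝ)^m :=
          mul_le_mul_of_nonneg_left hm.le (by positivity)
        have h2 : ((p:ℝ)⁻¹)^m * (p:ℝ)^m = 1 := by
          rw [← mul_pow, inv_mul_cancel₀ hp0.ne', one_pow]
        linarith
    -- Baire category: N has nonempty interior, hence is open
    set f : ℕ → Set (Fin d → ℚ_[p]) := fun k => (fun v => (p:ℚ_[p])^k • v) ⁻¹' N with hf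
    have hfcl : ∀ k, IsClosed (f k) := fun k => hcl.preimage (continuous_const_smul _)
    have hfU : ⋃ k, f k = Set.univ := by
      ext v
      simp only [Set.mem_iUnion, Set.mem_univ, iff_true, hf, Set.mem_preimage,
        SetLike.mem_coe]
      exact habs v
    obtain ⟨k, x, hx⟩ := nonempty_interior_of_iUnion_of_closed hfcl hfU
    have hnhds : (N : Set (Fin d → ℚ_[p])) ∈ 𝓝 ((p:ℚ_[p])^k • x) := by
      have hcont : Continuous (fun v : Fin d → ℚ_[p] => ((p:ℚ_[p])^k)⁻¹ • v) :=
        continuous_const_smul _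
      have h1 : f k ∈ 𝓝 x := mem_interior_iff_mem_nhds.1 hx
      have h2 : (fun v : Fin d → ℚ_[p] => ((p:ℚ_[p])^k)⁻¹ • v) ⁻¹' (f k)
          ∈ 𝓝 ((p:ℚ_[p])^k • x) := by
        apply hcont.continuousAt.preimage_mem_nhds
        rwa [inv_smul_smul₀ (hpk0 k)]
      refine Filter.mem_of_superset h2 ?_
      intro y hy
      simpa [hf, Set.mem_preimage, smul_inv_smul₀ (hpk0 k)] using hy
    have hNopen : IsOpen (N : Set (Fin d → ℚ_[p])) :=
      AddSubgroup.isOpen_of_mem_nhds N hnhds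
    -- images under powers of β
    have hpow : ∀ n : ℕ, ⇑(β^n) '' (N : Set (Fin d → ℚ_[p])) = N := by
      intro n
      induction n with
      | zero => simp [pow_zero]
      | succ n ih =>
        have e : ⇑(β^(n+1)) = ⇑(β^n) ∘ ⇑β := by
          ext v
          rw [pow_succ]
          rfl
        rw [e, Set.image_comp, hstab, ih]
    -- conclude
    rw [eq_top_iff]
    intro v _
    have hev : ∀ᶠ n in atTop, (β^n) v ∈ (N : Set (Fin d → ℚ_[p])) :=
      (hcontr v).eventually_mem (hNopen.mem_nhds N.zero_mem)
    obtain ⟨n, hn⟩ := hev.exists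
    rw [← hpow n] at hn
    obtain ⟨w, hw, hwv⟩ := hn
    have : w = v := (β^n).injective hwv
    rwa [← this]
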